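/- Let a₁, b₁, a₂, b₂ : ℝ → ℂ be continuous on [0,1]. For i = 1,2 define hᵢ : ℝ → ℂ on [0,4] by hᵢ(t) = aᵢ(t) for t ∈ [0,1], hᵢ(t) = bᵢ(t−1) for t ∈ (1,2], hᵢ(t) = −aᵢ(3−t) for t ∈ (2,3], hᵢ(t) = −bᵢ(4−t) for t ∈ (3,4]. Then ∫_{0 ≤ s ≤ t ≤ 4} h₁(s)h₂(t) ds dt = (∫_0^1 a₁)(∫_0^1 b₂) − (∫_0^1 b₁)(∫_0^1 a₂). -/

import Mathlib

open MeasureTheory Set intervalIntegral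

/-- Transfer interval integrability across pointwise equality on `Ioc c d`. -/
lemma comm_II_congr {g f : ℝ → ℂ} {c d : ℝ} (hcd : c ≤ d)
    (heq : Set.EqOn g f (Set.Ioc c d)) (hg : IntervalIntegrable g volume c d) :
    IntervalIntegrable f volume c d := by
  rw [intervalIntegrable_iff_integrableOn_Ioc_of_le hcd] at hg ⊢
  exact hg.congr_fun heq measurableSet_Ioc

/-- Interval integrals agree if the integrands agree on `Ioc c d`. -/
lemma comm_int_congr {f g : ℝ → ℂ} {c d : ℝ} (hcd : c ≤ d)
    (heq : Set.EqOn f g (Set.Ioc c d)) :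
    ∫ x in c..d, f x = ∫ x in c..d, g x :=
  intervalIntegral.integral_congr_ae
    (Filter.Eventually.of_forall fun x hx => heq (by rwa [Set.uIoc_of_le hcd] at hx))

/-- Lemma 5.7(b)/3.26(b): for the commutator loop `[α,β] = αβα⁻¹β⁻¹`,
`∫_{[α,β]} ω₁∘ω₂ = ∫_α ω₁ ∫_β ω₂ − ∫_β ω₁ ∫_α ω₂`.  Here `a i`, `b i` are the
pullbacks of `ωᵢ` along `α`, `β`, and `h i` is the pullback along `[α,β]`,
given piecewise on `[0,4]`. -/
theorem double_iterated_integral_over_commutator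
    (a b h : Fin 2 → ℝ → ℂ)
    (ha : ∀ i, ContinuousOn (a i) (Set.Icc 0 1))
    (hb : ∀ i, ContinuousOn (b i) (Set.Icc 0 1))
    (h1 : ∀ i, ∀ t ∈ Set.Icc (0:ℝ) 1, h i t = a i t)
    (h2 : ∀ i, ∀ t ∈ Set.Ioc (1:ℝ) 2, h i t = b i (t - 1))
    (h3 : ∀ i, ∀ t ∈ Set.Ioc (2:ℝ) 3, h i t = -a i (3 - t))
    (h4 : ∀ i, ∀ t ∈ Set.Ioc (3:ℝ) 4, h i t = -b i (4 - t)) :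
    (∫ t in (0:ℝ)..4, ∫ s in (0:ℝ)..t, h 0 s * h 1 t)
      = (∫ t in (0:ℝ)..1, a 0 t) * (∫ t in (0:ℝ)..1, b 1 t)
        - (∫ t in (0:ℝ)..1, b 0 t) * (∫ t in (0:ℝ)..1, a 1 t) := by
  have huIcc : Set.uIcc (0:ℝ) 1 = Set.Icc 0 1 := Set.uIcc_of_le (by norm_num)
  have ha' : ∀ i, ContinuousOn (a i) (Set.uIcc 0 1) := fun i => (ha i).mono huIcc.subset
  have hb' : ∀ i, ContinuousOn (b i) (Set.uIcc 0 1) := fun i => (hb i).mono huIcc.subset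
  have haI : ∀ i, IntervalIntegrable (a i) volume 0 1 := fun i => (ha' i).intervalIntegrable
  have hbI : ∀ i, IntervalIntegrable (b i) volume 0 1 := fun i => (hb' i).intervalIntegrable
  -- primitives
  set Pa : ℝ → ℂ := fun u => ∫ s in (0:ℝ)..u, a 0 s with hPa
  set Pb : ℝ → ℂ := fun u => ∫ s in (0:ℝ)..u, b 0 s with hPb
  have hPaC : ContinuousOn Pa (Set.uIcc 0 1) :=
    intervalIntegral.continuousOn_primitive_interval
      ((ha 0).integrableOn_Icc.mono_set huIcc.subset)
  have hPbC : ContinuousOn Pb (Set.uIcc 0 1) :=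
    intervalIntegral.continuousOn_primitive_interval
      ((hb 0).integrableOn_Icc.mono_set huIcc.subset)
  set A0 : ℂ := ∫ t in (0:ℝ)..1, a 0 t with hA0d
  set A1 : ℂ := ∫ t in (0:ℝ)..1, a 1 t with hA1d
  set B0 : ℂ := ∫ t in (0:ℝ)..1, b 0 t with hB0d
  set B1 : ℂ := ∫ t in (0:ℝ)..1, b 1 t with hB1d
  set Iaa : ℂ := ∫ u in (0:ℝ)..1, Pa u * a 1 u with hIaad
  set Ibb : ℂ := ∫ u in (0:ℝ)..1, Pb u * b 1 u with hIbbd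
  have h01 : ∀ i, Set.EqOn (h i) (a i) (Set.Ioc 0 1) :=
    fun i t ht => h1 i t (Set.Ioc_subset_Icc_self ht)
  -- integrability of h on pieces
  have hi01 : ∀ i, IntervalIntegrable (h i) volume 0 1 :=
    fun i => comm_II_congr (by norm_num) (h01 i).symm (haI i)
  have hcb : ∀ i, ∀ t ∈ Set.Icc (1:ℝ) 2,
      ContinuousOn (fun s : ℝ => b i (s - 1)) (Set.Icc 1 t) := fun i t ht =>
    (hb i).comp ((continuous_id.sub continuous_const).continuousOn)
      (fun s hs => by
        constructor <;> (try simp only [id_eq]) <;> [linarith [hs.1]; linarith [hs.2, ht.2]])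
  have hi1 : ∀ i, ∀ t ∈ Set.Icc (1:ℝ) 2, IntervalIntegrable (h i) volume 1 t := by
    intro i t ht
    refine comm_II_congr ht.1 (fun s hs => (h2 i s ⟨hs.1, hs.2.trans ht.2⟩).symm) ?_
    exact ((hcb i t ht).mono (Set.uIcc_of_le ht.1).subset).intervalIntegrable
  have hca : ∀ i, ∀ t ∈ Set.Icc (2:ℝ) 3,
      ContinuousOn (fun s : ℝ => -a i (3 - s)) (Set.Icc 2 t) := fun i t ht =>
    ((ha i).comp ((continuous_const.sub continuous_id).continuousOn)
      (fun s hs => by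
        constructor <;> (try simp only [Pi.sub_apply, id_eq]) <;> [linarith [hs.2, ht.2]; linarith [hs.1]])).neg
  have hi2 : ∀ i, ∀ t ∈ Set.Icc (2:ℝ) 3, IntervalIntegrable (h i) volume 2 t := by
    intro i t ht
    refine comm_II_congr ht.1 (fun s hs => (h3 i s ⟨hs.1, hs.2.trans ht.2⟩).symm) ?_
    exact ((hca i t ht).mono (Set.uIcc_of_le ht.1).subset).intervalIntegrable
  have hcb4 : ∀ i, ∀ t ∈ Set.Icc (3:ℝ) 4,
      ContinuousOn (fun s : ℝ => -b i (4 - s)) (Set.Icc 3 t) := fun i t ht =>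
    ((hb i).comp ((continuous_const.sub continuous_id).continuousOn)
      (fun s hs => by
        constructor <;> (try simp only [Pi.sub_apply, id_eq]) <;> [linarith [hs.2, ht.2]; linarith [hs.1]])).neg
  have hi3 : ∀ i, ∀ t ∈ Set.Icc (3:ℝ) 4, IntervalIntegrable (h i) volume 3 t := by
    intro i t ht
    refine comm_II_congr ht.1 (fun s hs => (h4 i s ⟨hs.1, hs.2.trans ht.2⟩).symm) ?_
    exact ((hcb4 i t ht).mono (Set.uIcc_of_le ht.1).subset).intervalIntegrable
  -- values of h-integrals on full pieces
  have v01 : (∫ s in (0:ℝ)..1, h 0 s) = A0 := comm_int_congr (by norm_num) (h01 0)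
  have v12 : (∫ s in (1:ℝ)..2, h 0 s) = B0 := by
    rw [comm_int_congr (f := h 0) (g := fun s => b 0 (s - 1)) (by norm_num)
      (fun s hs => h2 0 s hs), intervalIntegral.integral_comp_sub_right (b 0) 1]
    norm_num [hB0d]
  have v23 : (∫ s in (2:ℝ)..3, h 0 s) = -A0 := by
    rw [comm_int_congr (f := h 0) (g := fun s => -a 0 (3 - s)) (by norm_num)
        (fun s hs => h3 0 s hs), intervalIntegral.integral_neg,
      intervalIntegral.integral_comp_sub_left (a 0) 3]
    norm_num [hA0d]
  -- partial primitives of h on pieces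
  have v1t : ∀ t ∈ Set.Ioc (1:ℝ) 2, (∫ s in (1:ℝ)..t, h 0 s) = Pb (t - 1) := by
    intro t ht
    rw [comm_int_congr (f := h 0) (g := fun s => b 0 (s - 1)) ht.1.le
        (fun s hs => h2 0 s ⟨hs.1, hs.2.trans ht.2⟩),
      intervalIntegral.integral_comp_sub_right (b 0) 1]
    norm_num [hPb]
  have hPasub : ∀ u ∈ Set.Icc (0:ℝ) 1, (∫ x in u..(1:ℝ), a 0 x) = A0 - Pa u := by
    intro u hu
    refine (intervalIntegral.integral_interval_sub_left (haI 0) ?_).symm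
    apply (haI 0).mono_set
    rw [Set.uIcc_of_le hu.1, huIcc]
    exact Set.Icc_subset_Icc le_rfl hu.2
  have hPbsub : ∀ u ∈ Set.Icc (0:ℝ) 1, (∫ x in u..(1:ℝ), b 0 x) = B0 - Pb u := by
    intro u hu
    refine (intervalIntegral.integral_interval_sub_left (hbI 0) ?_).symm
    apply (hbI 0).mono_set
    rw [Set.uIcc_of_le hu.1, huIcc]
    exact Set.Icc_subset_Icc le_rfl hu.2
  have v2t : ∀ t ∈ Set.Ioc (2:ℝ) 3, (∫ s in (2:ℝ)..t, h 0 s) = Pa (3 - t) - A0 := by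
    intro t ht
    rw [comm_int_congr (f := h 0) (g := fun s => -a 0 (3 - s)) ht.1.le
        (fun s hs => h3 0 s ⟨hs.1, hs.2.trans ht.2⟩), intervalIntegral.integral_neg,
      intervalIntegral.integral_comp_sub_left (a 0) 3,
      show (3:ℝ) - 2 = 1 by norm_num,
      hPasub (3 - t) ⟨by linarith [ht.2], by linarith [ht.1]⟩]
    ring
  have v3t : ∀ t ∈ Set.Ioc (3:ℝ) 4, (∫ s in (3:ℝ)..t, h 0 s) = Pb (4 - t) - B0 := by
    intro t ht
    rw [comm_int_congr (f := h 0) (g := fun s => -b 0 (4 - s)) ht.1.le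
        (fun s hs => h4 0 s ⟨hs.1, hs.2.trans ht.2⟩), intervalIntegral.integral_neg,
      intervalIntegral.integral_comp_sub_left (b 0) 4,
      show (4:ℝ) - 3 = 1 by norm_num,
      hPbsub (4 - t) ⟨by linarith [ht.2], by linarith [ht.1]⟩]
    ring
  -- the cumulative integral of h 0
  set F : ℝ → ℂ := fun t => ∫ s in (0:ℝ)..t, h 0 s with hF
  have F1 : ∀ t ∈ Set.Ioc (0:ℝ) 1, F t = Pa t := by
    intro t ht
    exact comm_int_congr ht.1.le
      (fun s hs => h01 0 ⟨hs.1, hs.2.trans ht.2⟩)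
  have F2 : ∀ t ∈ Set.Ioc (1:ℝ) 2, F t = A0 + Pb (t - 1) := by
    intro t ht
    simp only [hF]
    rw [← intervalIntegral.integral_add_adjacent_intervals (hi01 0)
      (hi1 0 t ⟨ht.1.le, ht.2⟩), v01, v1t t ht]
  have F3 : ∀ t ∈ Set.Ioc (2:ℝ) 3, F t = B0 + Pa (3 - t) := by
    intro t ht
    simp only [hF]
    rw [← intervalIntegral.integral_add_adjacent_intervals
      ((hi01 0).trans (hi1 0 2 (by norm_num : (2:ℝ) ∈ Set.Icc 1 2))) (hi2 0 t ⟨ht.1.le, ht.2⟩),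
      ← intervalIntegral.integral_add_adjacent_intervals (hi01 0) (hi1 0 2 (by norm_num : (2:ℝ) ∈ Set.Icc 1 2)),
      v01, v12, v2t t ht]
    ring
  have F4 : ∀ t ∈ Set.Ioc (3:ℝ) 4, F t = Pb (4 - t) := by
    intro t ht
    simp only [hF]
    rw [← intervalIntegral.integral_add_adjacent_intervals
        (((hi01 0).trans (hi1 0 2 (by norm_num : (2:ℝ) ∈ Set.Icc 1 2))).trans (hi2 0 3 (by norm_num : (3:ℝ) ∈ Set.Icc 2 3)))
        (hi3 0 t ⟨ht.1.le, ht.2⟩),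
      ← intervalIntegral.integral_add_adjacent_intervals
        ((hi01 0).trans (hi1 0 2 (by norm_num : (2:ℝ) ∈ Set.Icc 1 2))) (hi2 0 3 (by norm_num : (3:ℝ) ∈ Set.Icc 2 3)),
      ← intervalIntegral.integral_add_adjacent_intervals (hi01 0) (hi1 0 2 (by norm_num : (2:ℝ) ∈ Set.Icc 1 2)),
      v01, v12, v23, v3t t ht]
    ring
  -- the integrand of the outer integral
  have hmul : (∫ t in (0:ℝ)..4, ∫ s in (0:ℝ)..t, h 0 s * h 1 t)
      = ∫ t in (0:ℝ)..4, F t * h 1 t := by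
    simp only [intervalIntegral.integral_mul_const, hF]
  rw [hmul]
  -- piecewise explicit integrands
  set g1 : ℝ → ℂ := fun t => Pa t * a 1 t with hg1
  set f2 : ℝ → ℂ := fun u => (A0 + Pb u) * b 1 u with hf2
  set f3 : ℝ → ℂ := fun u => (B0 + Pa u) * (-a 1 u) with hf3
  set f4 : ℝ → ℂ := fun u => Pb u * (-b 1 u) with hf4
  have e1 : Set.EqOn (fun t => F t * h 1 t) g1 (Set.Ioc 0 1) := by
    intro t ht
    simp only [hg1, F1 t ht, h1 1 t (Set.Ioc_subset_Icc_self ht)]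
  have e2 : Set.EqOn (fun t => F t * h 1 t) (fun t => f2 (t - 1)) (Set.Ioc 1 2) := by
    intro t ht
    simp only [hf2, F2 t ht, h2 1 t ht]
  have e3 : Set.EqOn (fun t => F t * h 1 t) (fun t => f3 (3 - t)) (Set.Ioc 2 3) := by
    intro t ht
    simp only [hf3, F3 t ht, h3 1 t ht]
  have e4 : Set.EqOn (fun t => F t * h 1 t) (fun t => f4 (4 - t)) (Set.Ioc 3 4) := by
    intro t ht
    simp only [hf4, F4 t ht, h4 1 t ht]
  -- continuity of the explicit integrands on [0,1]
  have cg1 : ContinuousOn g1 (Set.uIcc 0 1) := hPaC.mul (ha' 1)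
  have cf2 : ContinuousOn f2 (Set.uIcc 0 1) := (continuousOn_const.add hPbC).mul (hb' 1)
  have cf3 : ContinuousOn f3 (Set.uIcc 0 1) := (continuousOn_const.add hPaC).mul (ha' 1).neg
  have cf4 : ContinuousOn f4 (Set.uIcc 0 1) := hPbC.mul (hb' 1).neg
  -- integrability of F * h1 on pieces
  have cc2 : ContinuousOn (fun t : ℝ => f2 (t - 1)) (Set.uIcc 1 2) := by
    refine cf2.comp ((continuous_id.sub continuous_const).continuousOn) ?_
    intro s hs
    rw [Set.uIcc_of_le (by norm_num : (1:ℝ) ≤ 2)] at hs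
    rw [huIcc]
    try simp only [id_eq]
    exact ⟨by linarith [hs.1], by linarith [hs.2]⟩
  have cc3 : ContinuousOn (fun t : ℝ => f3 (3 - t)) (Set.uIcc 2 3) := by
    refine cf3.comp ((continuous_const.sub continuous_id).continuousOn) ?_
    intro s hs
    rw [Set.uIcc_of_le (by norm_num : (2:ℝ) ≤ 3)] at hs
    rw [huIcc]
    try simp only [id_eq]
    exact ⟨by linarith [hs.2], by linarith [hs.1]⟩
  have cc4 : ContinuousOn (fun t : ℝ => f4 (4 - t)) (Set.uIcc 3 4) := by
    refine cf4.comp ((continuous_const.sub continuous_id).continuousOn) ?_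
    intro s hs
    rw [Set.uIcc_of_le (by norm_num : (3:ℝ) ≤ 4)] at hs
    rw [huIcc]
    try simp only [id_eq]
    exact ⟨by linarith [hs.2], by linarith [hs.1]⟩
  have I1 : IntervalIntegrable (fun t => F t * h 1 t) volume 0 1 :=
    comm_II_congr (by norm_num) e1.symm cg1.intervalIntegrable
  have I2 : IntervalIntegrable (fun t => F t * h 1 t) volume 1 2 :=
    comm_II_congr (by norm_num) e2.symm cc2.intervalIntegrable
  have I3 : IntervalIntegrable (fun t => F t * h 1 t) volume 2 3 :=
    comm_II_congr (by norm_num) e3.symm cc3.intervalIntegrable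
  have I4 : IntervalIntegrable (fun t => F t * h 1 t) volume 3 4 :=
    comm_II_congr (by norm_num) e4.symm cc4.intervalIntegrable
  -- split the outer integral
  have split : (∫ t in (0:ℝ)..4, F t * h 1 t)
      = (∫ t in (0:ℝ)..1, F t * h 1 t) + (∫ t in (1:ℝ)..2, F t * h 1 t)
        + (∫ t in (2:ℝ)..3, F t * h 1 t) + (∫ t in (3:ℝ)..4, F t * h 1 t) := by
    rw [intervalIntegral.integral_add_adjacent_intervals I1 I2,
      intervalIntegral.integral_add_adjacent_intervals (I1.trans I2) I3,
      intervalIntegral.integral_add_adjacent_intervals ((I1.trans I2).trans I3) I4]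
  -- compute each piece
  have P1 : (∫ t in (0:ℝ)..1, F t * h 1 t) = Iaa := by
    rw [comm_int_congr (by norm_num) e1]
  have P2 : (∫ t in (1:ℝ)..2, F t * h 1 t) = A0 * B1 + Ibb := by
    rw [comm_int_congr (by norm_num) e2, intervalIntegral.integral_comp_sub_right f2 1,
      show (1:ℝ) - 1 = 0 by norm_num, show (2:ℝ) - 1 = 1 by norm_num]
    have : (∫ u in (0:ℝ)..1, f2 u)
        = (∫ u in (0:ℝ)..1, A0 * b 1 u) + ∫ u in (0:ℝ)..1, Pb u * b 1 u := by
      rw [← intervalIntegral.integral_add (f := fun u => A0 * b 1 u) (g := fun u => Pb u * b 1 u) ((hbI 1).const_mul A0)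
        (hPbC.mul (hb' 1)).intervalIntegrable]
      apply intervalIntegral.integral_congr
      intro u _
      simp only [hf2]; ring
    rw [this, intervalIntegral.integral_const_mul]
  have P3 : (∫ t in (2:ℝ)..3, F t * h 1 t) = -(B0 * A1 + Iaa) := by
    rw [comm_int_congr (by norm_num) e3, intervalIntegral.integral_comp_sub_left f3 3,
      show (3:ℝ) - 3 = 0 by norm_num, show (3:ℝ) - 2 = 1 by norm_num]
    have : (∫ u in (0:ℝ)..1, f3 u)
        = -((∫ u in (0:ℝ)..1, B0 * a 1 u) + ∫ u in (0:ℝ)..1, Pa u * a 1 u) := by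
      rw [← intervalIntegral.integral_add (f := fun u => B0 * a 1 u) (g := fun u => Pa u * a 1 u) ((haI 1).const_mul B0)
        (hPaC.mul (ha' 1)).intervalIntegrable, ← intervalIntegral.integral_neg]
      apply intervalIntegral.integral_congr
      intro u _
      simp only [hf3]; ring
    rw [this, intervalIntegral.integral_const_mul]
  have P4 : (∫ t in (3:ℝ)..4, F t * h 1 t) = -Ibb := by
    rw [comm_int_congr (by norm_num) e4, intervalIntegral.integral_comp_sub_left f4 4,
      show (4:ℝ) - 4 = 0 by norm_num, show (4:ℝ) - 3 = 1 by norm_num]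
    rw [← intervalIntegral.integral_neg]
    apply intervalIntegral.integral_congr
    intro u _
    simp only [hf4]; ring
  rw [split, P1, P2, P3, P4]
  ring
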